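/- Suppose β > γ > 0 and κ = ((ζ₁−1) − (ζ₂−1)(β/γ)^{ζ₂−ζ₁}) / ((ζ₁−ζ₂)(β/γ)^{ζ₂−1}). Then for all x₁, x₂ > 0 with γ ≤ x₁/x₂ ≤ β, the marginal value of assets is bounded between one and the cost of capital: 1 ≤ ∂G/∂x₁ (x₁, x₂; β, γ) ≤ κ. -/

import Mathlib

/-- The constant `C₁` of the two-barrier value function. -/
noncomputable def C1 (ζ₁ ζ₂ β γ κ : ℝ) : ℝ :=
  (1 - κ * β ^ (ζ₂ - 1) * γ ^ (1 - ζ₂)) /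
    (ζ₁ * (β ^ (ζ₁ - 1) - γ ^ (ζ₁ - ζ₂) * β ^ (ζ₂ - 1)))

/-- The constant `C₂` of the two-barrier value function. -/
noncomputable def C2 (ζ₁ ζ₂ β γ κ : ℝ) : ℝ :=
  (κ * γ ^ (1 - ζ₂) - C1 ζ₁ ζ₂ β γ κ * ζ₁ * γ ^ (ζ₁ - ζ₂)) / ζ₂

/-- The two-barrier value function `G(x₁, x₂; β, γ)` with dividend barrier `β`
and capital injection barrier `γ`. -/
noncomputable def G2 (ζ₁ ζ₂ β γ κ x₁ x₂ : ℝ) : ℝ :=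
  C1 ζ₁ ζ₂ β γ κ * x₁ ^ ζ₁ * x₂ ^ (1 - ζ₁)
    + C2 ζ₁ ζ₂ β γ κ * x₁ ^ ζ₂ * x₂ ^ (1 - ζ₂)


/-- The profile function is antitone on `(0, 1]`. -/
lemma phi_anti (ζ₁ ζ₂ c : ℝ) (hζ₁ : ζ₁ < 0) (hζ₂ : 1 < ζ₂) (hc : 0 < c) :
    AntitoneOn (fun t : ℝ => ((ζ₂ - 1) * t ^ (ζ₁ - 1) + (1 - ζ₁) * t ^ (ζ₂ - 1)) / (ζ₂ - ζ₁))
      (Set.Icc c 1) := by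
  have hd : ∀ t : ℝ, t ≠ 0 → HasDerivAt
      (fun t : ℝ => ((ζ₂ - 1) * t ^ (ζ₁ - 1) + (1 - ζ₁) * t ^ (ζ₂ - 1)) / (ζ₂ - ζ₁))
      (((ζ₂ - 1) * ((ζ₁ - 1) * t ^ (ζ₁ - 1 - 1)) + (1 - ζ₁) * ((ζ₂ - 1) * t ^ (ζ₂ - 1 - 1)))
        / (ζ₂ - ζ₁)) t := by
    intro t ht
    exact (((Real.hasDerivAt_rpow_const (Or.inl ht)).const_mul (ζ₂ - 1)).add
      ((Real.hasDerivAt_rpow_const (Or.inl ht)).const_mul (1 - ζ₁))).div_const (ζ₂ - ζ₁)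
  apply antitoneOn_of_deriv_nonpos (convex_Icc c 1)
  · intro t ht
    exact ((hd t (hc.trans_le ht.1).ne').differentiableAt).continuousAt.continuousWithinAt
  · intro t ht
    rw [interior_Icc] at ht
    exact ((hd t (hc.trans ht.1).ne').differentiableAt).differentiableWithinAt
  · intro t ht
    rw [interior_Icc] at ht
    have ht0 : 0 < t := hc.trans ht.1
    rw [(hd t ht0.ne').deriv]
    have hle : t ^ (ζ₂ - 1 - 1) ≤ t ^ (ζ₁ - 1 - 1) :=
      Real.rpow_le_rpow_of_exponent_ge ht0 ht.2.le (by linarith)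
    have h1 : (0:ℝ) < ζ₂ - 1 := by linarith
    have h2 : (0:ℝ) < 1 - ζ₁ := by linarith
    have h3 : (0:ℝ) < ζ₂ - ζ₁ := by linarith
    apply div_nonpos_of_nonpos_of_nonneg _ h3.le
    nlinarith [mul_nonneg (mul_nonneg h1.le h2.le) (sub_nonneg.2 hle)]

lemma C1_eq (ζ₁ ζ₂ β γ κ : ℝ) (hζ₁ : ζ₁ < 0) (hζ₂ : 1 < ζ₂)
    (hγ : 0 < γ) (hβγ : γ < β)
    (hκ : κ = ((ζ₁ - 1) - (ζ₂ - 1) * (β / γ) ^ (ζ₂ - ζ₁))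
            / ((ζ₁ - ζ₂) * (β / γ) ^ (ζ₂ - 1))) :
    C1 ζ₁ ζ₂ β γ κ * ζ₁ = (ζ₂ - 1) / (ζ₂ - ζ₁) * β ^ (1 - ζ₁) := by
  have hβ : 0 < β := hγ.trans hβγ
  have hP : (0:ℝ) < β ^ (ζ₁ - 1) := Real.rpow_pos_of_pos hβ _
  have hQ : (0:ℝ) < β ^ (ζ₂ - 1) := Real.rpow_pos_of_pos hβ _
  have hR : (0:ℝ) < γ ^ (ζ₂ - 1) := Real.rpow_pos_of_pos hγ _
  have hS : (0:ℝ) < γ ^ (ζ₁ - 1) := Real.rpow_pos_of_pos hγ _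
  have e1 : γ ^ (1 - ζ₂) = (γ ^ (ζ₂ - 1))⁻¹ := by
    rw [show (1 - ζ₂) = -(ζ₂ - 1) by ring, Real.rpow_neg hγ.le]
  have e2 : γ ^ (ζ₁ - ζ₂) = γ ^ (ζ₁ - 1) * (γ ^ (ζ₂ - 1))⁻¹ := by
    rw [show (ζ₁ - ζ₂) = (ζ₁ - 1) + -(ζ₂ - 1) by ring, Real.rpow_add hγ, Real.rpow_neg hγ.le]
  have e3 : (β / γ) ^ (ζ₂ - 1) = β ^ (ζ₂ - 1) * (γ ^ (ζ₂ - 1))⁻¹ := by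
    rw [Real.div_rpow hβ.le hγ.le, div_eq_mul_inv]
  have e4 : (β / γ) ^ (ζ₂ - ζ₁) = β ^ (ζ₂ - 1) * (β ^ (ζ₁ - 1))⁻¹ *
      (γ ^ (ζ₁ - 1) * (γ ^ (ζ₂ - 1))⁻¹) := by
    rw [Real.div_rpow hβ.le hγ.le,
      show (ζ₂ - ζ₁) = (ζ₂ - 1) + -(ζ₁ - 1) by ring,
      Real.rpow_add hβ, Real.rpow_add hγ, Real.rpow_neg hβ.le, Real.rpow_neg hγ.le]
    field_simp
  have e5 : β ^ (1 - ζ₁) = (β ^ (ζ₁ - 1))⁻¹ := by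
    rw [show (1 - ζ₁) = -(ζ₁ - 1) by ring, Real.rpow_neg hβ.le]
  have hq1 : 1 < (β / γ) ^ (ζ₂ - ζ₁) := by
    rw [Real.one_lt_rpow_iff_of_pos (div_pos hβ hγ)]
    exact Or.inl ⟨(one_lt_div hγ).2 hβγ, by linarith⟩
  rw [e4] at hq1
  have hne : β ^ (ζ₁ - 1) * γ ^ (ζ₂ - 1) < β ^ (ζ₂ - 1) * γ ^ (ζ₁ - 1) := by
    have h := mul_lt_mul_of_pos_right hq1 (mul_pos hP hR)
    rw [one_mul] at h
    calc β ^ (ζ₁ - 1) * γ ^ (ζ₂ - 1)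
        < β ^ (ζ₂ - 1) * (β ^ (ζ₁ - 1))⁻¹ * (γ ^ (ζ₁ - 1) * (γ ^ (ζ₂ - 1))⁻¹)
          * (β ^ (ζ₁ - 1) * γ ^ (ζ₂ - 1)) := h
      _ = β ^ (ζ₂ - 1) * γ ^ (ζ₁ - 1) := by
          field_simp
  have hden : β ^ (ζ₁ - 1) - γ ^ (ζ₁ - 1) * (γ ^ (ζ₂ - 1))⁻¹ * β ^ (ζ₂ - 1) ≠ 0 := by
    rw [sub_ne_zero]
    intro h
    apply hne.ne
    have := congrArg (· * γ ^ (ζ₂ - 1)) h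
    rw [this]
    field_simp
  have hc1 : C1 ζ₁ ζ₂ β γ κ * ζ₁ = (1 - κ * β ^ (ζ₂ - 1) * γ ^ (1 - ζ₂)) /
      (β ^ (ζ₁ - 1) - γ ^ (ζ₁ - ζ₂) * β ^ (ζ₂ - 1)) := by
    rw [C1, div_mul_eq_mul_div, mul_comm (1 - κ * β ^ (ζ₂ - 1) * γ ^ (1 - ζ₂)) ζ₁,
      mul_div_mul_left _ _ hζ₁.ne]
  rw [hc1, e1, e2, e5]
  rw [div_eq_iff hden, hκ, e3, e4]
  have h12 : ζ₁ - ζ₂ ≠ 0 := by intro h; nlinarith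
  have h21 : ζ₂ - ζ₁ ≠ 0 := by intro h; nlinarith
  field_simp
  ring

lemma C2_eq (ζ₁ ζ₂ β γ κ : ℝ) (hζ₁ : ζ₁ < 0) (hζ₂ : 1 < ζ₂)
    (hγ : 0 < γ) (hβγ : γ < β)
    (hκ : κ = ((ζ₁ - 1) - (ζ₂ - 1) * (β / γ) ^ (ζ₂ - ζ₁))
            / ((ζ₁ - ζ₂) * (β / γ) ^ (ζ₂ - 1))) :
    C2 ζ₁ ζ₂ β γ κ * ζ₂ = (1 - ζ₁) / (ζ₂ - ζ₁) * β ^ (1 - ζ₂) := by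
  have hβ : 0 < β := hγ.trans hβγ
  have hP : (0:ℝ) < β ^ (ζ₁ - 1) := Real.rpow_pos_of_pos hβ _
  have hQ : (0:ℝ) < β ^ (ζ₂ - 1) := Real.rpow_pos_of_pos hβ _
  have hR : (0:ℝ) < γ ^ (ζ₂ - 1) := Real.rpow_pos_of_pos hγ _
  have hS : (0:ℝ) < γ ^ (ζ₁ - 1) := Real.rpow_pos_of_pos hγ _
  have e1 : γ ^ (1 - ζ₂) = (γ ^ (ζ₂ - 1))⁻¹ := by
    rw [show (1 - ζ₂) = -(ζ₂ - 1) by ring, Real.rpow_neg hγ.le]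
  have e2 : γ ^ (ζ₁ - ζ₂) = γ ^ (ζ₁ - 1) * (γ ^ (ζ₂ - 1))⁻¹ := by
    rw [show (ζ₁ - ζ₂) = (ζ₁ - 1) + -(ζ₂ - 1) by ring, Real.rpow_add hγ, Real.rpow_neg hγ.le]
  have e3 : (β / γ) ^ (ζ₂ - 1) = β ^ (ζ₂ - 1) * (γ ^ (ζ₂ - 1))⁻¹ := by
    rw [Real.div_rpow hβ.le hγ.le, div_eq_mul_inv]
  have e4 : (β / γ) ^ (ζ₂ - ζ₁) = β ^ (ζ₂ - 1) * (β ^ (ζ₁ - 1))⁻¹ *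
      (γ ^ (ζ₁ - 1) * (γ ^ (ζ₂ - 1))⁻¹) := by
    rw [Real.div_rpow hβ.le hγ.le,
      show (ζ₂ - ζ₁) = (ζ₂ - 1) + -(ζ₁ - 1) by ring,
      Real.rpow_add hβ, Real.rpow_add hγ, Real.rpow_neg hβ.le, Real.rpow_neg hγ.le]
    field_simp
  have e5 : β ^ (1 - ζ₁) = (β ^ (ζ₁ - 1))⁻¹ := by
    rw [show (1 - ζ₁) = -(ζ₁ - 1) by ring, Real.rpow_neg hβ.le]
  have e6 : β ^ (1 - ζ₂) = (β ^ (ζ₂ - 1))⁻¹ := by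
    rw [show (1 - ζ₂) = -(ζ₂ - 1) by ring, Real.rpow_neg hβ.le]
  have hζ₂0 : ζ₂ ≠ 0 := by linarith
  have h12 : ζ₁ - ζ₂ ≠ 0 := by intro h; nlinarith
  have h21 : ζ₂ - ζ₁ ≠ 0 := by intro h; nlinarith
  rw [C2, div_mul_cancel₀ _ hζ₂0, C1_eq ζ₁ ζ₂ β γ κ hζ₁ hζ₂ hγ hβγ hκ, hκ,
    e1, e2, e3, e4, e5, e6]
  field_simp
  ring

/-- under the first-order optimality relation for `κ`, the
marginal value of assets is bounded between 1 and `κ` on the continuation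
region `γ ≤ x₁/x₂ ≤ β`. -/
theorem stmt_17 (μA μL δ σA σL ρ ζ₁ ζ₂ β γ κ : ℝ)
    (hσA : 0 < σA) (hσL : 0 < σL) (hρ₁ : -1 < ρ) (hρ₂ : ρ < 1)
    (hμ : μL < μA) (hδ : μA < δ)
    (hroot₁ : (1 / 2) * (σA ^ 2 + σL ^ 2 - 2 * ρ * σA * σL) * ζ₁ * (ζ₁ - 1)
      + (μA - μL) * ζ₁ + (μL - δ) = 0)
    (hroot₂ : (1 / 2) * (σA ^ 2 + σL ^ 2 - 2 * ρ * σA * σL) * ζ₂ * (ζ₂ - 1)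
      + (μA - μL) * ζ₂ + (μL - δ) = 0)
    (hζlt : ζ₁ < ζ₂) (hζ₁ : ζ₁ < 0) (hζ₂ : 1 < ζ₂)
    (hγ : 0 < γ) (hβγ : γ < β) (hκ1 : 1 < κ)
    (hκ : κ = ((ζ₁ - 1) - (ζ₂ - 1) * (β / γ) ^ (ζ₂ - ζ₁))
            / ((ζ₁ - ζ₂) * (β / γ) ^ (ζ₂ - 1))) :
    ∀ x₁ x₂ : ℝ, 0 < x₁ → 0 < x₂ → γ ≤ x₁ / x₂ → x₁ / x₂ ≤ β →
      1 ≤ deriv (fun t => G2 ζ₁ ζ₂ β γ κ t x₂) x₁ ∧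
      deriv (fun t => G2 ζ₁ ζ₂ β γ κ t x₂) x₁ ≤ κ := by

  intro x₁ x₂ hx₁ hx₂ hlo hhi
  have hβ : 0 < β := hγ.trans hβγ
  have h21 : (0:ℝ) < ζ₂ - ζ₁ := by linarith
  have hC1 := C1_eq ζ₁ ζ₂ β γ κ hζ₁ hζ₂ hγ hβγ hκ
  have hC2 := C2_eq ζ₁ ζ₂ β γ κ hζ₁ hζ₂ hγ hβγ hκ
  -- compute the derivative
  have hder : HasDerivAt (fun t => G2 ζ₁ ζ₂ β γ κ t x₂)
      (C1 ζ₁ ζ₂ β γ κ * (ζ₁ * x₁ ^ (ζ₁ - 1)) * x₂ ^ (1 - ζ₁)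
        + C2 ζ₁ ζ₂ β γ κ * (ζ₂ * x₁ ^ (ζ₂ - 1)) * x₂ ^ (1 - ζ₂)) x₁ := by
    have h1 := ((Real.hasDerivAt_rpow_const (p := ζ₁)
      (Or.inl hx₁.ne')).const_mul (C1 ζ₁ ζ₂ β γ κ)).mul_const (x₂ ^ (1 - ζ₁))
    have h2 := ((Real.hasDerivAt_rpow_const (p := ζ₂)
      (Or.inl hx₁.ne')).const_mul (C2 ζ₁ ζ₂ β γ κ)).mul_const (x₂ ^ (1 - ζ₂))
    exact h1.add h2
  rw [hder.deriv]
  set s : ℝ := x₁ / (β * x₂) with hs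
  have hs0 : 0 < s := div_pos hx₁ (mul_pos hβ hx₂)
  have hs1 : s ≤ 1 := by
    rw [hs, div_le_one (mul_pos hβ hx₂)]
    have := (div_le_iff₀ hx₂).1 hhi
    linarith
  have hcs : γ / β ≤ s := by
    rw [hs, div_le_div_iff₀ hβ (mul_pos hβ hx₂)]
    have := (le_div_iff₀ hx₂).1 hlo
    nlinarith
  have hc0 : 0 < γ / β := div_pos hγ hβ
  have hcb : γ / β ≤ 1 := ((div_le_one hβ).2 hβγ.le)
  -- the derivative equals the profile function at s
  have hval : C1 ζ₁ ζ₂ β γ κ * (ζ₁ * x₁ ^ (ζ₁ - 1)) * x₂ ^ (1 - ζ₁)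
      + C2 ζ₁ ζ₂ β γ κ * (ζ₂ * x₁ ^ (ζ₂ - 1)) * x₂ ^ (1 - ζ₂)
      = ((ζ₂ - 1) * s ^ (ζ₁ - 1) + (1 - ζ₁) * s ^ (ζ₂ - 1)) / (ζ₂ - ζ₁) := by
    have key : ∀ p : ℝ, s ^ p = x₁ ^ p * (β ^ p)⁻¹ * (x₂ ^ p)⁻¹ := by
      intro p
      rw [hs, Real.div_rpow hx₁.le (mul_pos hβ hx₂).le, Real.mul_rpow hβ.le hx₂.le,
        div_eq_mul_inv, mul_inv, ← mul_assoc]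
    have ex1 : x₂ ^ (1 - ζ₁) = (x₂ ^ (ζ₁ - 1))⁻¹ := by
      rw [show (1 - ζ₁) = -(ζ₁ - 1) by ring, Real.rpow_neg hx₂.le]
    have ex2 : x₂ ^ (1 - ζ₂) = (x₂ ^ (ζ₂ - 1))⁻¹ := by
      rw [show (1 - ζ₂) = -(ζ₂ - 1) by ring, Real.rpow_neg hx₂.le]
    have eb1 : β ^ (1 - ζ₁) = (β ^ (ζ₁ - 1))⁻¹ := by
      rw [show (1 - ζ₁) = -(ζ₁ - 1) by ring, Real.rpow_neg hβ.le]
    have eb2 : β ^ (1 - ζ₂) = (β ^ (ζ₂ - 1))⁻¹ := by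
      rw [show (1 - ζ₂) = -(ζ₂ - 1) by ring, Real.rpow_neg hβ.le]
    rw [eb1] at hC1
    rw [eb2] at hC2
    rw [key (ζ₁ - 1), key (ζ₂ - 1), ex1, ex2]
    linear_combination (x₁ ^ (ζ₁ - 1) * (x₂ ^ (ζ₁ - 1))⁻¹) * hC1
      + (x₁ ^ (ζ₂ - 1) * (x₂ ^ (ζ₂ - 1))⁻¹) * hC2
  rw [hval]
  -- value at the endpoints
  have hφ1 : ((ζ₂ - 1) * (1:ℝ) ^ (ζ₁ - 1) + (1 - ζ₁) * (1:ℝ) ^ (ζ₂ - 1)) / (ζ₂ - ζ₁) = 1 := by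
    rw [Real.one_rpow, Real.one_rpow]
    field_simp
    ring
  have hφc : ((ζ₂ - 1) * (γ / β) ^ (ζ₁ - 1) + (1 - ζ₁) * (γ / β) ^ (ζ₂ - 1)) / (ζ₂ - ζ₁)
      = κ := by
    have ha : (0:ℝ) < (γ / β) ^ (ζ₁ - 1) := Real.rpow_pos_of_pos hc0 _
    have hb : (0:ℝ) < (γ / β) ^ (ζ₂ - 1) := Real.rpow_pos_of_pos hc0 _
    have hbg : β / γ = (γ / β)⁻¹ := by rw [inv_div]
    have h12 : ζ₁ - ζ₂ ≠ 0 := by linarith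
    have e : (γ / β) ^ (ζ₂ - ζ₁) = (γ / β) ^ (ζ₂ - 1) * ((γ / β) ^ (ζ₁ - 1))⁻¹ := by
      rw [show (ζ₂ - ζ₁) = (ζ₂ - 1) + -(ζ₁ - 1) by ring, Real.rpow_add hc0,
        Real.rpow_neg hc0.le]
    rw [hκ, hbg, Real.inv_rpow hc0.le, Real.inv_rpow hc0.le, e]
    field_simp
    ring
  -- conclude via antitonicity of the profile function
  have hanti := phi_anti ζ₁ ζ₂ (γ / β) hζ₁ hζ₂ hc0
  have hmem_s : s ∈ Set.Icc (γ / β) 1 := ⟨hcs, hs1⟩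
  have hmem_1 : (1:ℝ) ∈ Set.Icc (γ / β) 1 := ⟨hcb, le_refl 1⟩
  have hmem_c : γ / β ∈ Set.Icc (γ / β) 1 := ⟨le_refl _, hcb⟩
  constructor
  · have h := hanti hmem_s hmem_1 hs1
    simp only at h
    rw [hφ1] at h
    exact h
  · have h := hanti hmem_c hmem_s hcs
    simp only at h
    rw [hφc] at h
    exact h
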